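/- Let x, y be finitely supported probability vectors. If there exists a sequence (x_n) of finitely supported probability vectors with ‖x_n - x‖₁ → 0 and for each n a finitely supported probability vector z_n with x_n ⊗ z_n ≺ y ⊗ z_n, then ‖x‖_p ≤ ‖y‖_p for all p ≥ 1. -/

import Mathlib

open scoped BigOperators

noncomputable def kMaxSum {ι : Type*} (f : ι → ℝ) (k : ℕ) : ℝ :=
  sSup {t : ℝ | ∃ A : Finset ι, A.card = k ∧ ∑ i ∈ A, f i = t}

def Submaj {ι κ : Type*} (f : ι → ℝ) (g : κ → ℝ) : Prop :=
  ∀ k : ℕ, kMaxSum f k ≤ kMaxSum g k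

def MajT {ι κ : Type*} (f : ι → ℝ) (g : κ → ℝ) : Prop :=
  (∑' i, f i = ∑' j, g j) ∧ Submaj f g

def tensor {ι κ : Type*} (f : ι → ℝ) (g : κ → ℝ) : ι × κ → ℝ :=
  fun p => f p.1 * g p.2

def IsFinProbVec (f : ℕ → ℝ) : Prop :=
  (∀ i, 0 ≤ f i) ∧ (Function.support f).Finite ∧ ∑' i, f i = 1

noncomputable def pNormT {ι : Type*} (f : ι → ℝ) (p : ℝ) : ℝ :=
  (∑' i, f i ^ p) ^ (1 / p)

section Aux

open MeasureTheory

lemma tsum_rpow_eq_sum' {ι : Type*} (f : ι → ℝ) {p : ℝ} (hp : p ≠ 0) (S : Finset ι)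
    (hS : Function.support f ⊆ ↑S) :
    ∑' i, f i ^ p = ∑ i ∈ S, f i ^ p := by
  refine tsum_eq_sum ?_
  intro i hi
  have hfi : f i = 0 := by
    by_contra h
    exact hi (hS h)
  rw [hfi, Real.zero_rpow hp]

/-- The sum of a nonnegative finitely supported function over any finset is at most the
sum over its support. -/
lemma sum_le_sum_support {ι : Type*} {f : ι → ℝ} (hf0 : ∀ i, 0 ≤ f i)
    (hff : (Function.support f).Finite) (B : Finset ι) :
    ∑ i ∈ B, f i ≤ ∑ i ∈ hff.toFinset, f i := by
  classical
  calc ∑ i ∈ B, f i ≤ ∑ i ∈ B ∪ hff.toFinset, f i :=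
        Finset.sum_le_sum_of_subset_of_nonneg Finset.subset_union_left (fun i _ _ => hf0 i)
    _ = ∑ i ∈ hff.toFinset, f i := by
        refine (Finset.sum_subset Finset.subset_union_right (fun i _ hi => ?_)).symm
        by_contra h
        exact hi (hff.mem_toFinset.mpr h)

/-- Key consequence of submajorization: comparison of sums of positive parts. -/
lemma sum_posPart_le {ι κ : Type*} [Infinite κ] {f : ι → ℝ} {g : κ → ℝ}
    (hf0 : ∀ i, 0 ≤ f i) (hg0 : ∀ j, 0 ≤ g j)
    (hff : (Function.support f).Finite) (hgg : (Function.support g).Finite)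
    (hsub : Submaj f g) {t : ℝ} (ht : 0 < t) :
    ∑ i ∈ hff.toFinset, max (f i - t) 0 ≤ ∑ j ∈ hgg.toFinset, max (g j - t) 0 := by
  classical
  set Sf := hff.toFinset with hSf
  set Sg := hgg.toFinset with hSg
  set A := Sf.filter (fun i => t < f i) with hA
  set k := A.card with hk
  -- LHS equals ∑_{i ∈ A} f i - k * t
  have hL : ∑ i ∈ Sf, max (f i - t) 0 = ∑ i ∈ A, f i - (k : ℝ) * t := by
    rw [← Finset.sum_filter_add_sum_filter_not Sf (fun i => t < f i)]
    have h2 : ∑ i ∈ Sf.filter (fun i => ¬ t < f i), max (f i - t) 0 = 0 := by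
      refine Finset.sum_eq_zero (fun i hi => ?_)
      have hle : f i ≤ t := not_lt.mp (Finset.mem_filter.mp hi).2
      exact max_eq_right (by linarith)
    rw [h2, add_zero]
    have h1 : ∑ i ∈ A, max (f i - t) 0 = ∑ i ∈ A, (f i - t) := by
      refine Finset.sum_congr rfl (fun i hi => ?_)
      have hlt : t < f i := (Finset.mem_filter.mp hi).2
      exact max_eq_left (by linarith)
    rw [h1, Finset.sum_sub_distrib, Finset.sum_const, nsmul_eq_mul]
  have h1 : ∑ i ∈ A, f i ≤ kMaxSum f k := by
    refine le_csSup ⟨∑ i ∈ Sf, f i, ?_⟩ ⟨A, rfl, rfl⟩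
    rintro r ⟨B, hB, rfl⟩
    exact sum_le_sum_support hf0 hff B
  have h2 : kMaxSum f k ≤ kMaxSum g k := hsub k
  have h3 : kMaxSum g k ≤ (∑ j ∈ Sg, max (g j - t) 0) + (k : ℝ) * t := by
    refine csSup_le ?_ ?_
    · obtain ⟨B, hB⟩ := Infinite.exists_subset_card_eq κ k
      exact ⟨_, B, hB, rfl⟩
    rintro r ⟨B, hBk, rfl⟩
    have hstep : ∑ j ∈ B, g j ≤ ∑ j ∈ B, max (g j - t) 0 + (k : ℝ) * t := by
      calc ∑ j ∈ B, g j ≤ ∑ j ∈ B, (max (g j - t) 0 + t) := by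
            refine Finset.sum_le_sum (fun j _ => ?_)
            have := le_max_left (g j - t) 0
            linarith
        _ = ∑ j ∈ B, max (g j - t) 0 + (k : ℝ) * t := by
            rw [Finset.sum_add_distrib, Finset.sum_const, hBk, nsmul_eq_mul]
    have hbd : ∑ j ∈ B, max (g j - t) 0 ≤ ∑ j ∈ Sg, max (g j - t) 0 := by
      calc ∑ j ∈ B, max (g j - t) 0 ≤ ∑ j ∈ B ∪ Sg, max (g j - t) 0 :=
            Finset.sum_le_sum_of_subset_of_nonneg Finset.subset_union_left
              (fun j _ _ => le_max_right _ _)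
        _ = ∑ j ∈ Sg, max (g j - t) 0 := by
            refine (Finset.sum_subset Finset.subset_union_right (fun j _ hj => ?_)).symm
            have hgj : g j = 0 := by
              by_contra h
              exact hj (hgg.mem_toFinset.mpr h)
            rw [hgj]
            exact max_eq_right (by linarith)
    linarith
  linarith

lemma integrableOn_posPart_rpow {p M : ℝ} (hp : 1 < p) (hM : 0 < M) (s : ℝ) :
    IntegrableOn (fun t => max (s - t) 0 * t ^ (p - 2)) (Set.Ioc 0 M) := by
  have h1 : IntegrableOn (fun t : ℝ => t ^ (p - 2)) (Set.Ioc 0 M) := by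
    have := intervalIntegral.intervalIntegrable_rpow' (a := 0) (b := M) (r := p - 2)
      (by linarith)
    exact (intervalIntegrable_iff_integrableOn_Ioc_of_le hM.le).mp this
  have hmeas : AEStronglyMeasurable (fun t : ℝ => max (s - t) 0)
      (volume.restrict (Set.Ioc 0 M)) :=
    ((continuous_const.sub continuous_id).max continuous_const).aestronglyMeasurable
  refine (h1.const_mul (max s 0)).mono (hmeas.mul h1.aestronglyMeasurable) ?_
  refine (ae_restrict_iff' measurableSet_Ioc).mpr (Filter.Eventually.of_forall (fun t ht => ?_))
  have ht0 : 0 < t := ht.1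
  have hpw : 0 ≤ t ^ (p - 2) := Real.rpow_nonneg ht0.le _
  have h1' : max (s - t) 0 ≤ max s 0 := by
    rcases le_or_gt (s - t) 0 with h | h
    · simp [max_eq_right h, le_max_right]
    · calc max (s - t) 0 = s - t := max_eq_left h.le
        _ ≤ s := by linarith
        _ ≤ max s 0 := le_max_left _ _
  have h0 : 0 ≤ max (s - t) 0 := le_max_right _ _
  have h0' : 0 ≤ max s 0 := le_max_right _ _
  rw [Real.norm_eq_abs, Real.norm_eq_abs, abs_mul, abs_mul, abs_of_nonneg h0,
    abs_of_nonneg h0', abs_of_nonneg hpw]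
  exact mul_le_mul_of_nonneg_right h1' hpw

lemma integral_posPart_rpow {p : ℝ} (hp : 1 < p) {s M : ℝ} (hs : 0 ≤ s) (hsM : s ≤ M)
    (hM : 0 < M) :
    ∫ t in Set.Ioc 0 M, max (s - t) 0 * t ^ (p - 2) = s ^ p / (p * (p - 1)) := by
  rcases eq_or_lt_of_le hs with hs0 | hs0
  · -- s = 0
    have hz : ∫ t in Set.Ioc 0 M, max (s - t) 0 * t ^ (p - 2) = 0 := by
      rw [setIntegral_congr_fun measurableSet_Ioc
        (g := fun _ : ℝ => (0:ℝ)) (fun t ht => by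
          have : s - t < 0 := by
            have := ht.1; linarith [hs0.symm ▸ this]
          rw [max_eq_right this.le, zero_mul])]
      simp
    rw [hz, ← hs0, Real.zero_rpow (by linarith), zero_div]
  -- s > 0
  have hint1 : IntervalIntegrable (fun t : ℝ => max (s - t) 0 * t ^ (p - 2)) volume 0 s := by
    rw [intervalIntegrable_iff_integrableOn_Ioc_of_le hs]
    exact integrableOn_posPart_rpow hp hs0 s
  have hint2 : IntervalIntegrable (fun t : ℝ => max (s - t) 0 * t ^ (p - 2)) volume s M := by
    rw [intervalIntegrable_iff_integrableOn_Ioc_of_le hsM]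
    exact (integrableOn_posPart_rpow hp hM s).mono_set
      (Set.Ioc_subset_Ioc_left hs0.le)
  have hsplit : (∫ t in Set.Ioc 0 M, max (s - t) 0 * t ^ (p - 2))
      = (∫ t in (0:ℝ)..s, max (s - t) 0 * t ^ (p - 2))
        + ∫ t in s..M, max (s - t) 0 * t ^ (p - 2) := by
    rw [intervalIntegral.integral_add_adjacent_intervals hint1 hint2,
      intervalIntegral.integral_of_le hM.le]
  have hzero : (∫ t in s..M, max (s - t) 0 * t ^ (p - 2)) = 0 := by
    rw [intervalIntegral.integral_of_le hsM]
    rw [setIntegral_congr_fun measurableSet_Ioc (g := fun _ : ℝ => (0:ℝ))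
      (fun t ht => by
        have : s - t < 0 := by linarith [ht.1]
        rw [max_eq_right this.le, zero_mul])]
    simp
  have hmain : (∫ t in (0:ℝ)..s, max (s - t) 0 * t ^ (p - 2)) = s ^ p / (p * (p - 1)) := by
    have hcongr : (∫ t in (0:ℝ)..s, max (s - t) 0 * t ^ (p - 2))
        = ∫ t in (0:ℝ)..s, (s * t ^ (p - 2) - t ^ (p - 1)) := by
      rw [intervalIntegral.integral_of_le hs, intervalIntegral.integral_of_le hs]
      refine setIntegral_congr_fun measurableSet_Ioc (fun t ht => ?_)
      have ht0 : 0 < t := ht.1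
      have hts : t ≤ s := ht.2
      have hmax : max (s - t) 0 = s - t := max_eq_left (by linarith)
      have hpow : t ^ (p - 1) = t * t ^ (p - 2) := by
        have h := Real.rpow_add ht0 1 (p - 2)
        rw [Real.rpow_one] at h
        rw [show p - 1 = 1 + (p - 2) by ring, h]
      rw [hmax, sub_mul, hpow]
    have hi1 : IntervalIntegrable (fun t : ℝ => t ^ (p - 2)) volume 0 s :=
      intervalIntegral.intervalIntegrable_rpow' (by linarith)
    have hi2 : IntervalIntegrable (fun t : ℝ => t ^ (p - 1)) volume 0 s :=
      intervalIntegral.intervalIntegrable_rpow' (by linarith)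
    rw [hcongr, intervalIntegral.integral_sub (hi1.const_mul s) hi2,
      intervalIntegral.integral_const_mul, integral_rpow (Or.inl (by linarith)),
      integral_rpow (Or.inl (by linarith))]
    have e1 : p - 2 + 1 = p - 1 := by ring
    have e2 : p - 1 + 1 = p := by ring
    rw [e1, e2]
    rw [Real.zero_rpow (by linarith), Real.zero_rpow (by linarith)]
    have hsp : s * s ^ (p - 1) = s ^ p := by
      have h := Real.rpow_add hs0 1 (p - 1)
      rw [Real.rpow_one] at h
      rw [← h]
      norm_num
    rw [sub_zero, sub_zero]
    have e3 : s * (s ^ (p - 1) / (p - 1)) = s ^ p / (p - 1) := by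
      rw [← hsp]; ring
    rw [e3]
    have hpne : p ≠ 0 := by linarith
    have hp1ne : p - 1 ≠ 0 := by linarith
    field_simp
    ring
  rw [hsplit, hzero, add_zero, hmain]

/-- Schur-convexity of `p`-th power sums for `p > 1` from submajorization. -/
lemma tsum_rpow_le_of_submaj {ι κ : Type*} [Infinite κ] {f : ι → ℝ} {g : κ → ℝ}
    (hf0 : ∀ i, 0 ≤ f i) (hg0 : ∀ j, 0 ≤ g j)
    (hff : (Function.support f).Finite) (hgg : (Function.support g).Finite)
    (hsub : Submaj f g) {p : ℝ} (hp : 1 < p) :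
    ∑' i, f i ^ p ≤ ∑' j, g j ^ p := by
  classical
  set Sf := hff.toFinset with hSf
  set Sg := hgg.toFinset with hSg
  set M : ℝ := ∑ i ∈ Sf, f i + ∑ j ∈ Sg, g j + 1 with hMdef
  have hSfsum : 0 ≤ ∑ i ∈ Sf, f i := Finset.sum_nonneg (fun i _ => hf0 i)
  have hSgsum : 0 ≤ ∑ j ∈ Sg, g j := Finset.sum_nonneg (fun j _ => hg0 j)
  have hM : 0 < M := by rw [hMdef]; linarith
  have hfM : ∀ i, f i ≤ M := by
    intro i
    have : f i ≤ ∑ i' ∈ Sf, f i' := by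
      by_cases hi : i ∈ Sf
      · exact Finset.single_le_sum (fun j _ => hf0 j) hi
      · have : f i = 0 := by
          by_contra h
          exact hi (hff.mem_toFinset.mpr h)
        rw [this]; exact hSfsum
    rw [hMdef]; linarith
  have hgM : ∀ j, g j ≤ M := by
    intro j
    have : g j ≤ ∑ j' ∈ Sg, g j' := by
      by_cases hj : j ∈ Sg
      · exact Finset.single_le_sum (fun j' _ => hg0 j') hj
      · have : g j = 0 := by
          by_contra h
          exact hj (hgg.mem_toFinset.mpr h)
        rw [this]; exact hSgsum
    rw [hMdef]; linarith
  have hppos : (0:ℝ) < p * (p - 1) := by nlinarith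
  have hrepf : ∀ i ∈ Sf, f i ^ p
      = (p * (p - 1)) * ∫ t in Set.Ioc 0 M, max (f i - t) 0 * t ^ (p - 2) := by
    intro i _
    rw [integral_posPart_rpow hp (hf0 i) (hfM i) hM]
    field_simp
    rw [mul_div_assoc, div_self (sub_ne_zero.mpr hp.ne'), mul_one]
  have hrepg : ∀ j ∈ Sg, g j ^ p
      = (p * (p - 1)) * ∫ t in Set.Ioc 0 M, max (g j - t) 0 * t ^ (p - 2) := by
    intro j _
    rw [integral_posPart_rpow hp (hg0 j) (hgM j) hM]
    field_simp
    rw [mul_div_assoc, div_self (sub_ne_zero.mpr hp.ne'), mul_one]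
  have hintf : IntegrableOn (fun t => ∑ i ∈ Sf, max (f i - t) 0 * t ^ (p - 2))
      (Set.Ioc 0 M) :=
    integrable_finset_sum _ (fun i _ => integrableOn_posPart_rpow hp hM (f i))
  have hintg : IntegrableOn (fun t => ∑ j ∈ Sg, max (g j - t) 0 * t ^ (p - 2))
      (Set.Ioc 0 M) :=
    integrable_finset_sum _ (fun j _ => integrableOn_posPart_rpow hp hM (g j))
  have hmono : (∫ t in Set.Ioc 0 M, ∑ i ∈ Sf, max (f i - t) 0 * t ^ (p - 2))
      ≤ ∫ t in Set.Ioc 0 M, ∑ j ∈ Sg, max (g j - t) 0 * t ^ (p - 2) := by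
    refine setIntegral_mono_on hintf hintg measurableSet_Ioc (fun t ht => ?_)
    rw [← Finset.sum_mul, ← Finset.sum_mul]
    exact mul_le_mul_of_nonneg_right (sum_posPart_le hf0 hg0 hff hgg hsub ht.1)
      (Real.rpow_nonneg ht.1.le _)
  calc ∑' i, f i ^ p = ∑ i ∈ Sf, f i ^ p :=
        tsum_rpow_eq_sum' f (by linarith) Sf (by simp [hSf])
    _ = (p * (p - 1)) * ∑ i ∈ Sf, ∫ t in Set.Ioc 0 M, max (f i - t) 0 * t ^ (p - 2) := by
        rw [Finset.sum_congr rfl hrepf, ← Finset.mul_sum]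
    _ = (p * (p - 1)) * ∫ t in Set.Ioc 0 M, ∑ i ∈ Sf, max (f i - t) 0 * t ^ (p - 2) := by
        rw [integral_finset_sum _ (fun i _ => integrableOn_posPart_rpow hp hM (f i))]
    _ ≤ (p * (p - 1)) * ∫ t in Set.Ioc 0 M, ∑ j ∈ Sg, max (g j - t) 0 * t ^ (p - 2) :=
        mul_le_mul_of_nonneg_left hmono hppos.le
    _ = (p * (p - 1)) * ∑ j ∈ Sg, ∫ t in Set.Ioc 0 M, max (g j - t) 0 * t ^ (p - 2) := by
        rw [integral_finset_sum _ (fun j _ => integrableOn_posPart_rpow hp hM (g j))]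
    _ = ∑ j ∈ Sg, g j ^ p := by
        rw [Finset.sum_congr rfl hrepg, ← Finset.mul_sum]
    _ = ∑' j, g j ^ p :=
        (tsum_rpow_eq_sum' g (by linarith) Sg (by simp [hSg])).symm

/-- Factorization of the `p`-th power sum of a tensor product. -/
lemma tsum_rpow_tensor {ι κ : Type*} (f : ι → ℝ) (g : κ → ℝ)
    (hf0 : ∀ i, 0 ≤ f i) (hg0 : ∀ j, 0 ≤ g j)
    (hff : (Function.support f).Finite) (hgg : (Function.support g).Finite)
    {p : ℝ} (hp : 0 < p) :
    ∑' q : ι × κ, tensor f g q ^ p = (∑' i, f i ^ p) * (∑' j, g j ^ p) := by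
  classical
  rw [tsum_rpow_eq_sum' f hp.ne' hff.toFinset (by simp),
    tsum_rpow_eq_sum' g hp.ne' hgg.toFinset (by simp),
    tsum_rpow_eq_sum' (tensor f g) hp.ne' (hff.toFinset ×ˢ hgg.toFinset) ?_]
  · calc ∑ q ∈ hff.toFinset ×ˢ hgg.toFinset, tensor f g q ^ p
        = ∑ i ∈ hff.toFinset, ∑ j ∈ hgg.toFinset, (f i * g j) ^ p := by
          rw [Finset.sum_product]; rfl
      _ = ∑ i ∈ hff.toFinset, ∑ j ∈ hgg.toFinset, f i ^ p * g j ^ p :=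
          Finset.sum_congr rfl (fun i _ => Finset.sum_congr rfl
            (fun j _ => Real.mul_rpow (hf0 i) (hg0 j)))
      _ = (∑ i ∈ hff.toFinset, f i ^ p) * (∑ j ∈ hgg.toFinset, g j ^ p) := by
          rw [Finset.sum_mul]
          exact Finset.sum_congr rfl (fun i _ => (Finset.mul_sum _ _ _).symm)
  · intro q hq
    simp only [Function.mem_support, tensor, ne_eq] at hq
    have h1 : f q.1 ≠ 0 := fun h => hq (by rw [h, zero_mul])
    have h2 : g q.2 ≠ 0 := fun h => hq (by rw [h, mul_zero])
    simp only [Finset.coe_product, Set.mem_prod, Finset.mem_coe, Set.Finite.mem_toFinset,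
      Function.mem_support]
    exact ⟨h1, h2⟩

end Aux

/-- (b) ⇒ (c) of the main theorem: if `x` is an ℓ¹-limit of finitely supported
probability vectors `x_n`, each trumped by `y` (i.e. `x_n ⊗ z_n ≺ y ⊗ z_n` for some
finitely supported probability catalyst `z_n`), then `‖x‖_p ≤ ‖y‖_p` for all `p ≥ 1`. -/
theorem pNorm_le_of_approx_catalytic (x y : ℕ → ℝ) (xs zs : ℕ → ℕ → ℝ)
    (hx : IsFinProbVec x) (hy : IsFinProbVec y)
    (hxs : ∀ n, IsFinProbVec (xs n)) (hzs : ∀ n, IsFinProbVec (zs n))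
    (hconv : Filter.Tendsto (fun n => ∑' i, |xs n i - x i|) Filter.atTop (nhds 0))
    (hmaj : ∀ n, MajT (tensor (xs n) (zs n)) (tensor y (zs n))) :
    ∀ p : ℝ, 1 ≤ p → pNormT x p ≤ pNormT y p := by
  classical
  intro p hp
  rcases eq_or_lt_of_le hp with hp1 | hp1
  · -- p = 1
    have hx1 : pNormT x p = 1 := by
      rw [pNormT, ← hp1]
      simp only [Real.rpow_one]
      rw [hx.2.2, Real.one_rpow]
    have hy1 : pNormT y p = 1 := by
      rw [pNormT, ← hp1]
      simp only [Real.rpow_one]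
      rw [hy.2.2, Real.one_rpow]
    rw [hx1, hy1]
  -- p > 1
  have hppos : (0:ℝ) < p := by linarith
  -- Step 1: for each n, ∑' (xs n)^p ≤ ∑' y^p.
  have hkey : ∀ n, ∑' i, xs n i ^ p ≤ ∑' j, y j ^ p := by
    intro n
    have hxn := hxs n
    have hzn := hzs n
    have hft : (Function.support (tensor (xs n) (zs n))).Finite := by
      refine Set.Finite.subset (hxn.2.1.prod hzn.2.1) ?_
      intro q hq
      simp only [Function.mem_support, tensor, ne_eq] at hq
      exact ⟨fun h => hq (by rw [h, zero_mul]), fun h => hq (by rw [h, mul_zero])⟩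
    have hgt : (Function.support (tensor y (zs n))).Finite := by
      refine Set.Finite.subset (hy.2.1.prod hzn.2.1) ?_
      intro q hq
      simp only [Function.mem_support, tensor, ne_eq] at hq
      exact ⟨fun h => hq (by rw [h, zero_mul]), fun h => hq (by rw [h, mul_zero])⟩
    have hf0 : ∀ q : ℕ × ℕ, 0 ≤ tensor (xs n) (zs n) q :=
      fun q => mul_nonneg (hxn.1 q.1) (hzn.1 q.2)
    have hg0 : ∀ q : ℕ × ℕ, 0 ≤ tensor y (zs n) q :=
      fun q => mul_nonneg (hy.1 q.1) (hzn.1 q.2)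
    have hten : ∑' q : ℕ × ℕ, tensor (xs n) (zs n) q ^ p
        ≤ ∑' q : ℕ × ℕ, tensor y (zs n) q ^ p :=
      tsum_rpow_le_of_submaj hf0 hg0 hft hgt (hmaj n).2 hp1
    rw [tsum_rpow_tensor (xs n) (zs n) hxn.1 hzn.1 hxn.2.1 hzn.2.1 hppos,
      tsum_rpow_tensor y (zs n) hy.1 hzn.1 hy.2.1 hzn.2.1 hppos] at hten
    -- ∑' (zs n)^p > 0
    have hzpos : 0 < ∑' j, zs n j ^ p := by
      have hex : ∃ j, zs n j ≠ 0 := by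
        by_contra h
        push_neg at h
        have := hzn.2.2
        simp only [h] at this
        rw [tsum_zero] at this
        norm_num at this
      obtain ⟨j, hj⟩ := hex
      have hjpos : 0 < zs n j := lt_of_le_of_ne (hzn.1 j) (Ne.symm hj)
      have hjmem : j ∈ hzn.2.1.toFinset := hzn.2.1.mem_toFinset.mpr hj
      calc (0:ℝ) < zs n j ^ p := Real.rpow_pos_of_pos hjpos p
        _ ≤ ∑ j' ∈ hzn.2.1.toFinset, zs n j' ^ p :=
            Finset.single_le_sum (fun j' _ => Real.rpow_nonneg (hzn.1 j') p) hjmem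
        _ = ∑' j', zs n j' ^ p :=
            (tsum_rpow_eq_sum' (zs n) hppos.ne' hzn.2.1.toFinset (by simp)).symm
    exact le_of_mul_le_mul_right hten hzpos
  -- Step 2: take the limit in n.
  have hmain : ∑' i, x i ^ p ≤ ∑' j, y j ^ p := by
    set A := hx.2.1.toFinset with hAdef
    have hxA : ∑' i, x i ^ p = ∑ i ∈ A, x i ^ p :=
      tsum_rpow_eq_sum' x hppos.ne' A (by simp [hAdef])
    rw [hxA]
    -- pointwise convergence
    have hpt : ∀ i, Filter.Tendsto (fun n => xs n i) Filter.atTop (nhds (x i)) := by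
      intro i
      have hsumm : ∀ n, Summable (fun j => |xs n j - x j|) := by
        intro n
        refine summable_of_ne_finset_zero
          (s := (hxs n).2.1.toFinset ∪ hx.2.1.toFinset) (fun j hj => ?_)
        simp only [Finset.mem_union, Set.Finite.mem_toFinset, Function.mem_support,
          not_or, not_not] at hj
        rw [hj.1, hj.2, sub_zero, abs_zero]
      have hle : ∀ n, |xs n i - x i| ≤ ∑' j, |xs n j - x j| :=
        fun n => Summable.le_tsum (hsumm n) i (fun j _ => abs_nonneg _)
      have habs : Filter.Tendsto (fun n => |xs n i - x i|) Filter.atTop (nhds 0) :=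
        squeeze_zero (fun n => abs_nonneg _) hle hconv
      rw [tendsto_iff_norm_sub_tendsto_zero]
      simpa only [Real.norm_eq_abs] using habs
    have htend : Filter.Tendsto (fun n => ∑ i ∈ A, xs n i ^ p) Filter.atTop
        (nhds (∑ i ∈ A, x i ^ p)) := by
      refine tendsto_finset_sum A (fun i _ => ?_)
      exact ((Real.continuousAt_rpow_const (x i) p (Or.inr hppos.le)).tendsto).comp (hpt i)
    refine le_of_tendsto' htend (fun n => ?_)
    calc ∑ i ∈ A, xs n i ^ p ≤ ∑ i ∈ A ∪ (hxs n).2.1.toFinset, xs n i ^ p :=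
          Finset.sum_le_sum_of_subset_of_nonneg Finset.subset_union_left
            (fun i _ _ => Real.rpow_nonneg ((hxs n).1 i) p)
      _ = ∑' i, xs n i ^ p := by
          refine (tsum_rpow_eq_sum' (xs n) hppos.ne' _ ?_).symm
          intro i hi
          simp only [Finset.coe_union, Set.mem_union, Finset.mem_coe,
            Set.Finite.mem_toFinset]
          exact Or.inr hi
      _ ≤ ∑' j, y j ^ p := hkey n
  -- Conclude
  rw [pNormT, pNormT]
  refine Real.rpow_le_rpow (tsum_nonneg (fun i => Real.rpow_nonneg (hx.1 i) p)) hmain ?_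
  positivity
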